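/- Let g : [0,∞) → (0,∞) be differentiable, convex, strictly decreasing, and let Y have survival function F̄_Y > 0, density f_Y, and mean residual life m_Y. If (δ₁*,…,δ_{N_D}*) with 0 = δ₀* < δ₁* < ⋯ < δ_{N_D}* is a critical point of h(δ) = Σ_{j=0}^{N_D−1} g(δ_j) ∫_{δ_j}^{δ_{j+1}} F̄_Y + g(δ_{N_D}) ∫_{δ_{N_D}}^∞ F̄_Y, then for k = 1,…,N_D−1: (g(δ_{k−1}*) − g(δ_k*))/(−g'(δ_k*)) = (∫_{δ_k*}^{δ_{k+1}*} F̄_Y(t) dt)/F̄_Y(δ_k*), and for k = N_D: (g(δ_{N_D−1}*) − g(δ_{N_D}*))/(−g'(δ_{N_D}*)) = m_Y(δ_{N_D}*). -/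

import Mathlib

open MeasureTheory Set

/-- derivative of `x ↦ ∫_{(c,x]} F` at `b` when `c < b`. -/
lemma aux_deriv_Ioc_right (F : ℝ → ℝ) (hF : Continuous F) {c b : ℝ} (hcb : c < b) :
    HasDerivAt (fun x => ∫ t in Set.Ioc c x, F t) (F b) b := by
  have h1 : HasDerivAt (fun x => ∫ t in c..x, F t) (F b) b :=
    intervalIntegral.integral_hasDerivAt_right (hF.intervalIntegrable c b)
      (hF.stronglyMeasurableAtFilter _ _) hF.continuousAt
  refine h1.congr_of_eventuallyEq ?_
  filter_upwards [Ioi_mem_nhds hcb] with x hx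
  exact (intervalIntegral.integral_of_le (le_of_lt hx)).symm

/-- derivative of `x ↦ ∫_{(x,d]} F` at `b` when `b < d`. -/
lemma aux_deriv_Ioc_left (F : ℝ → ℝ) (hF : Continuous F) {d b : ℝ} (hbd : b < d) :
    HasDerivAt (fun x => ∫ t in Set.Ioc x d, F t) (-F b) b := by
  have h1 : HasDerivAt (fun x => ∫ t in x..d, F t) (-F b) b :=
    intervalIntegral.integral_hasDerivAt_left (hF.intervalIntegrable b d)
      (hF.stronglyMeasurableAtFilter _ _) hF.continuousAt
  refine h1.congr_of_eventuallyEq ?_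
  filter_upwards [Iio_mem_nhds hbd] with x hx
  exact (intervalIntegral.integral_of_le (le_of_lt hx)).symm

/-- derivative of `x ↦ ∫_{(x,∞)} F` at `b` when `c < b` and `F` integrable on `(c,∞)`. -/
lemma aux_deriv_Ioi (F : ℝ → ℝ) (hF : Continuous F) {c b : ℝ} (hcb : c < b)
    (hInt : IntegrableOn F (Set.Ioi c)) :
    HasDerivAt (fun x => ∫ t in Set.Ioi x, F t) (-F b) b := by
  have h1 : HasDerivAt (fun x => (∫ t in Set.Ioi c, F t) - ∫ t in c..x, F t) (-F b) b := by
    have h2 : HasDerivAt (fun x => ∫ t in c..x, F t) (F b) b :=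
      intervalIntegral.integral_hasDerivAt_right (hF.intervalIntegrable c b)
        (hF.stronglyMeasurableAtFilter _ _) hF.continuousAt
    simpa using (hasDerivAt_const b (∫ t in Set.Ioi c, F t)).fun_sub h2
  refine h1.congr_of_eventuallyEq ?_
  filter_upwards [Ioi_mem_nhds hcb] with x hx
  have hsplit : ∫ t in Set.Ioi c, F t = (∫ t in Set.Ioc c x, F t) + ∫ t in Set.Ioi x, F t := by
    rw [← Set.Ioc_union_Ioi_eq_Ioi (le_of_lt hx)]
    exact setIntegral_union (Set.Ioc_disjoint_Ioi le_rfl) measurableSet_Ioi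
      (hF.integrableOn_Ioc) (hInt.mono_set (Set.Ioi_subset_Ioi (le_of_lt hx)))
  rw [intervalIntegral.integral_of_le (le_of_lt hx)]
  linarith [hsplit]

/-- First-order optimality conditions for the deployment problem with a fixed number
`N` of deployments: at a critical point of
`h(δ) = Σ_{j=0}^{N-1} g(δ_j)∫_{δ_j}^{δ_{j+1}} F̄ + g(δ_N)∫_{δ_N}^∞ F̄`,
`(g(δ_{k-1}) - g(δ_k))/(-g'(δ_k))` equals `(∫_{δ_k}^{δ_{k+1}} F̄)/F̄(δ_k)` for
`1 ≤ k < N` and equals the mean residual life `m_Y(δ_N)` for `k = N`. -/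
theorem stmt_13 (N : ℕ) (hN : 1 ≤ N)
    (g g' F : ℝ → ℝ)
    (hg_conv : ConvexOn ℝ (Set.Ici 0) g) (hg_pos : ∀ t, 0 ≤ t → 0 < g t)
    (hg_deriv : ∀ t, HasDerivAt g (g' t) t) (hg'_neg : ∀ t, 0 ≤ t → g' t < 0)
    (hF_pos : ∀ t, 0 < F t) (hF_cont : Continuous F)
    (hF_int : IntegrableOn F (Set.Ioi 0))
    (δ : ℕ → ℝ) (h0 : δ 0 = 0) (hmono : ∀ j < N, δ j < δ (j + 1))
    (hcrit : ∀ k, 1 ≤ k → k ≤ N →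
      HasDerivAt (fun x =>
        (∑ j ∈ Finset.range N,
            g (Function.update δ k x j) *
              ∫ t in Set.Ioc (Function.update δ k x j) (Function.update δ k x (j + 1)), F t)
          + g (Function.update δ k x N) *
              ∫ t in Set.Ioi (Function.update δ k x N), F t)
        0 (δ k)) :
    (∀ k, 1 ≤ k → k < N →
      (g (δ (k - 1)) - g (δ k)) / (-(g' (δ k)))
        = (∫ t in Set.Ioc (δ k) (δ (k + 1)), F t) / F (δ k)) ∧
    (g (δ (N - 1)) - g (δ N)) / (-(g' (δ N)))
        = (∫ t in Set.Ioi (δ N), F t) / F (δ N) := by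
  have hδ_nonneg : ∀ j, j ≤ N → 0 ≤ δ j := by
    intro j hj
    induction j with
    | zero => simp [h0]
    | succ n ih =>
      have h1 := hmono n (by omega)
      have h2 := ih (by omega)
      linarith
  -- main computation
  have key : ∀ k, 1 ≤ k → k ≤ N → ∀ I : ℝ,
      ((k < N ∧ I = ∫ t in Set.Ioc (δ k) (δ (k+1)), F t) ∨
       (k = N ∧ I = ∫ t in Set.Ioi (δ k), F t)) →
      (g (δ (k - 1)) - g (δ k)) / (-(g' (δ k)))
        = I / F (δ k) := by
    intro k hk1 hkN I hI
    have hkm : δ (k - 1) < δ k := by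
      have := hmono (k - 1) (by omega)
      rwa [show k - 1 + 1 = k by omega] at this
    have hknn : 0 ≤ δ k := hδ_nonneg k hkN
    have hkmnn : 0 ≤ δ (k - 1) := hδ_nonneg (k - 1) (by omega)
    -- the derivative of each summand
    set A' : ℕ → ℝ := fun j =>
      if j = k - 1 then g (δ (k - 1)) * F (δ k)
      else if j = k then g' (δ k) * (∫ t in Set.Ioc (δ k) (δ (k+1)), F t) + g (δ k) * (-F (δ k))
      else 0 with hA'
    have hsum : HasDerivAt (fun x =>
        ∑ j ∈ Finset.range N,
            g (Function.update δ k x j) *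
              ∫ t in Set.Ioc (Function.update δ k x j) (Function.update δ k x (j + 1)), F t)
        (∑ j ∈ Finset.range N, A' j) (δ k) := by
      apply HasDerivAt.fun_sum
      intro j hj
      rcases eq_or_ne j (k - 1) with hj1 | hj1
      · -- j = k - 1
        subst hj1
        have e1 : k - 1 + 1 = k := by omega
        have e2 : k - 1 ≠ k := by omega
        simp only [hA', if_pos rfl]
        rw [e1]
        simp only [Function.update_self, Function.update_of_ne e2]
        exact ((aux_deriv_Ioc_right F hF_cont hkm).const_mul (g (δ (k - 1))))
      · rcases eq_or_ne j k with hj2 | hj2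
        · -- j = k (so k < N)
          subst hj2
          have hkN' : j < N := Finset.mem_range.mp hj
          have e3 : j + 1 ≠ j := by omega
          have hup : δ j < δ (j + 1) := hmono j hkN'
          simp only [hA', if_neg hj1, if_pos rfl, Function.update_self,
            Function.update_of_ne e3]
          exact (hg_deriv (δ j)).mul (aux_deriv_Ioc_left F hF_cont hup)
        · -- constant term
          have e4 : j + 1 ≠ k := by omega
          simp only [hA', if_neg hj1, if_neg hj2, Function.update_of_ne hj2,
            Function.update_of_ne e4]
          exact hasDerivAt_const _ _
    have hsumval : ∑ j ∈ Finset.range N, A' j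
        = g (δ (k - 1)) * F (δ k)
          + (if k < N then
              g' (δ k) * (∫ t in Set.Ioc (δ k) (δ (k+1)), F t) + g (δ k) * (-F (δ k))
            else 0) := by
      have hre : ∀ j, A' j = (if j = k - 1 then g (δ (k - 1)) * F (δ k) else 0)
          + (if j = k then g' (δ k) * (∫ t in Set.Ioc (δ k) (δ (k+1)), F t)
              + g (δ k) * (-F (δ k)) else 0) := by
        intro j
        rcases eq_or_ne j (k - 1) with h | h
        · subst h; simp [hA', show k - 1 ≠ k by omega]
        · rcases eq_or_ne j k with h2 | h2
          · subst h2; simp [hA', h]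
          · simp [hA', h, h2]
      simp only [hre, Finset.sum_add_distrib, Finset.sum_ite_eq' (Finset.range N),
        Finset.mem_range]
      rw [if_pos (by omega : k - 1 < N)]
    -- tail derivative
    rcases hI with ⟨hkltN, hIeq⟩ | ⟨hkeqN, hIeq⟩
    · -- case k < N : tail is constant
      have hNk : N ≠ k := by omega
      have htail : HasDerivAt (fun x =>
          g (Function.update δ k x N) * ∫ t in Set.Ioi (Function.update δ k x N), F t)
          0 (δ k) := by
        simp only [Function.update_of_ne hNk]
        exact hasDerivAt_const _ _
      have htot := hsum.add htail
      have h0' := hcrit k hk1 hkN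
      have heq := htot.unique h0'
      rw [hsumval, if_pos hkltN] at heq
      have hFk := hF_pos (δ k)
      have hg'k := hg'_neg (δ k) hknn
      rw [hIeq, div_eq_div_iff (by linarith) (by linarith)]
      nlinarith [heq]
    · -- case k = N : tail varies
      have hupd : ∀ x : ℝ, Function.update δ k x N = x := by
        intro x; rw [← hkeqN]; exact Function.update_self ..
      have htail : HasDerivAt (fun x =>
          g (Function.update δ k x N) * ∫ t in Set.Ioi (Function.update δ k x N), F t)
          (g' (δ k) * (∫ t in Set.Ioi (δ k), F t) + g (δ k) * (-F (δ k))) (δ k) := by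
        simp only [hupd]
        have hInt' : IntegrableOn F (Set.Ioi (δ (k - 1))) := by
          rcases eq_or_lt_of_le hkmnn with h | h
          · rwa [← h]
          · exact hF_int.mono_set (Set.Ioi_subset_Ioi (le_of_lt h))
        exact (hg_deriv (δ k)).mul (aux_deriv_Ioi F hF_cont hkm hInt')
      have htot := hsum.add htail
      have h0' := hcrit k hk1 hkN
      have heq := htot.unique h0'
      rw [hsumval, if_neg (by omega)] at heq
      have hFk := hF_pos (δ k)
      have hg'k := hg'_neg (δ k) hknn
      rw [hIeq, div_eq_div_iff (by linarith) (by linarith)]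
      nlinarith [heq]
  constructor
  · intro k hk1 hkN
    exact key k hk1 (le_of_lt hkN) _ (Or.inl ⟨hkN, rfl⟩)
  · exact key N hN le_rfl _ (Or.inr ⟨rfl, rfl⟩)
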